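/- In the wire gadget: let t ≥ 2, let c₁, …, c_{t-1} be pairwise disjoint nonempty finite sets, and let s₁, …, s_t be sets with c_i ⊆ s_i ∩ s_{i+1} and s_j ∩ c_i = ∅ for j ∉ {i, i+1}. If S ⊆ {s₁, …, s_t} covers every point of ⋃ c_i uniquely, then membership of s₁ in S determines membership of every s_j in S: s_j ∈ S iff j has the same parity as 1 when s₁ ∈ S, and iff j has the same parity as 2 when s₁ ∉ S. -/
import Mathlib


/-- In the wire gadget, if the selection `T ⊆ {1, …, t}` covers every cloud point
uniquely, then membership of `s 1` determines all the others: if `1 ∈ T` then exactly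
the odd-indexed sets are selected, and if `1 ∉ T` then exactly the even-indexed sets
are selected. -/
theorem wire_unique_cover_parity {α : Type*} (t : ℕ) (ht : 2 ≤ t)
    (s : ℕ → Set α) (c : ℕ → Set α)
    (hne : ∀ i, 1 ≤ i → i ≤ t - 1 → (c i).Nonempty)
    (hdisj : ∀ i j, 1 ≤ i → i ≤ t - 1 → 1 ≤ j → j ≤ t - 1 → i ≠ j → Disjoint (c i) (c j))
    (hsub : ∀ i, 1 ≤ i → i ≤ t - 1 → c i ⊆ s i ∩ s (i + 1))
    (hout : ∀ i j, 1 ≤ i → i ≤ t - 1 → 1 ≤ j → j ≤ t → j ≠ i → j ≠ i + 1 →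
      Disjoint (s j) (c i))
    (T : Set ℕ) (hT : ∀ j ∈ T, 1 ≤ j ∧ j ≤ t)
    (huniq : ∀ i, 1 ≤ i → i ≤ t - 1 → ∀ p ∈ c i, ∃! j, j ∈ T ∧ p ∈ s j) :
    ∀ j, 1 ≤ j → j ≤ t →
      ((1 ∈ T → (j ∈ T ↔ j % 2 = 1)) ∧ (1 ∉ T → (j ∈ T ↔ j % 2 = 0))) := by
  have key : ∀ i, 1 ≤ i → i ≤ t - 1 → (i ∈ T ↔ (i + 1) ∉ T) := by
    intro i h1 h2
    obtain ⟨p, hp⟩ := hne i h1 h2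
    obtain ⟨j, ⟨hjT, hpj⟩, hju⟩ := huniq i h1 h2 p hp
    have hps := hsub i h1 h2 hp
    constructor
    · intro hi hi1
      have e1 : i = j := hju i ⟨hi, hps.1⟩
      have e2 : i + 1 = j := hju (i + 1) ⟨hi1, hps.2⟩
      omega
    · intro hni
      by_contra hnot
      have hj := hT j hjT
      have h1j : j ≠ i := by rintro rfl; exact hnot hjT
      have h2j : j ≠ i + 1 := by rintro rfl; exact hni hjT
      exact Set.disjoint_left.mp (hout i j h1 h2 hj.1 hj.2 h1j h2j) hpj hp
  have H : ∀ j, 1 ≤ j → j ≤ t → (j ∈ T ↔ (1 ∈ T ↔ j % 2 = 1)) := by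
    intro j hj1
    induction j, hj1 using Nat.le_induction with
    | base => intro _; simp
    | succ n hn ih =>
      intro hnt
      have hk := key n hn (by omega)
      have ihn := ih (by omega)
      have hpar : (n + 1) % 2 = 1 ↔ ¬ (n % 2 = 1) := by omega
      tauto
  intro j hj1 hj2
  have h := H j hj1 hj2
  have hmod : j % 2 = 0 ↔ ¬ (j % 2 = 1) := by omega
  constructor <;> intro h1 <;> tauto
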